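/- Let f : I ⊂ [0,∞) → ℝ be differentiable on I°, m ∈ (0,1], ma, b ∈ I° with a < b, and suppose f' is integrable on [ma, mb]. If |f'|^q is (α,m)-convex on [ma,b] for some fixed q ≥ 1 and (α,m) ∈ [0,1]², then for every x ∈ [a,b] and θ > 0 the generalized trapezoid-type inequality holds: |((x−a)^θ f(ma) + (b−x)^θ f(mb))/(b−a) − (Γ(θ+1)/(m^θ (b−a))) [J_{(mx)−}^θ f(ma) + J_{(mx)+}^θ f(mb)]| ≤ (m/(b−a)) (θ/(θ+1))^{1−1/q} { (x−a)^{θ+1} ( |f'(mx)|^q · θ/((α+1)(α+θ+1)) + m |f'(a)|^q · θα(α+θ+2)/((θ+1)(α+1)(α+θ+1)) )^{1/q} + (b−x)^{θ+1} ( |f'(mx)|^q · θ/((α+1)(α+θ+1)) + m |f'(b)|^q · θα(α+θ+2)/((θ+1)(α+1)(α+θ+1)) )^{1/q} }. -/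

import Mathlib

open MeasureTheory Set intervalIntegral Real

/-- Riemann-Liouville fractional integral `J_{d^-}^θ f(c) = (1/Γ(θ)) ∫_c^d (t-c)^(θ-1) f(t) dt`. -/
noncomputable def rlLeft (θ c d : ℝ) (f : ℝ → ℝ) : ℝ :=
  (1 / Real.Gamma θ) * ∫ t in c..d, (t - c) ^ (θ - 1) * f t

/-- Riemann-Liouville fractional integral `J_{c^+}^θ f(d) = (1/Γ(θ)) ∫_c^d (d-t)^(θ-1) f(t) dt`. -/
noncomputable def rlRight (θ c d : ℝ) (f : ℝ → ℝ) : ℝ :=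
  (1 / Real.Gamma θ) * ∫ t in c..d, (d - t) ^ (θ - 1) * f t

/-- The quantity `S_f(mx, λ, θ, ma, mb)` from the paper. -/
noncomputable def Sf (f : ℝ → ℝ) (m a b x lam θ : ℝ) : ℝ :=
  (1 - lam) * m ^ (θ - 1) * (((x - a) ^ θ + (b - x) ^ θ) / (b - a)) * f (m * x)
  + lam * m ^ (θ - 1) * (((x - a) ^ θ * f (m * a) + (b - x) ^ θ * f (m * b)) / (b - a))
  - Real.Gamma (θ + 1) / (m * (b - a)) *
      (rlLeft θ (m * a) (m * x) f + rlRight θ (m * x) (m * b) f)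

/-- `(α,m)`-convexity of `g` on the interval `[c,d]`. -/
def AlphaMConvexOn (α m c d : ℝ) (g : ℝ → ℝ) : Prop :=
  ∀ u ∈ Set.Icc c d, ∀ v ∈ Set.Icc c d, ∀ t ∈ Set.Icc (0:ℝ) 1,
    t * u + m * (1 - t) * v ∈ Set.Icc c d →
      g (t * u + m * (1 - t) * v) ≤ t ^ α * g u + m * (1 - t ^ α) * g v

noncomputable def A1 (θ lam : ℝ) : ℝ := (2 * θ * lam ^ (1 + 1 / θ) + 1) / (θ + 1) - lam

noncomputable def A2 (α θ lam : ℝ) : ℝ :=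
  2 * θ * lam ^ (1 + (1 + α) / θ) / ((α + 1) * (α + θ + 1)) + 1 / (α + θ + 1) - lam / (α + 1)

noncomputable def A3 (α θ lam : ℝ) : ℝ := A1 θ lam - A2 α θ lam


lemma mem_uIcc_affine {e p t : ℝ} (ht0 : 0 ≤ t) (ht1 : t ≤ 1) :
    e + t * (p - e) ∈ Set.uIcc e p := by
  rcases le_total e p with h | h
  · rw [Set.uIcc_of_le h]; constructor <;> nlinarith
  · rw [Set.uIcc_of_ge h]; constructor <;> nlinarith

lemma ident_side (f f' : ℝ → ℝ) (e p θ : ℝ) (hθ : 0 < θ)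
    (hf : ∀ y ∈ Set.uIcc e p, HasDerivAt f (f' y) y)
    (hint : IntervalIntegrable f' volume e p) :
    f e - θ * ∫ t in (0:ℝ)..1, t ^ (θ - 1) * f (e + t * (p - e))
      = (p - e) * ∫ t in (0:ℝ)..1, (t ^ θ - 1) * f' (e + t * (p - e)) := by
  have hφc : Continuous fun t : ℝ => e + t * (p - e) := by continuity
  have hcomp : ∀ t ∈ Set.Icc (0:ℝ) 1,
      HasDerivAt (fun t : ℝ => f (e + t * (p - e))) (f' (e + t * (p - e)) * (p - e)) t := by
    intro t ht
    have hφd : HasDerivAt (fun t : ℝ => e + t * (p - e)) (p - e) t := by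
      simpa using ((hasDerivAt_id t).mul_const (p - e)).const_add e
    exact (hf _ (mem_uIcc_affine ht.1 ht.2)).comp t hφd
  have hfc : ContinuousOn (fun t : ℝ => f (e + t * (p - e))) (Set.Icc 0 1) := fun t ht =>
    (hcomp t ht).continuousAt.continuousWithinAt
  have hint2 : IntervalIntegrable (fun t : ℝ => f' (e + t * (p - e))) volume 0 1 := by
    rcases eq_or_ne p e with rfl | hpe
    · simp only [sub_self, mul_zero, add_zero]
      exact intervalIntegrable_const
    · have hpe' : p - e ≠ 0 := sub_ne_zero.mpr hpe
      have h2 := (hint.comp_add_left e).comp_mul_left (c := p - e)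
      simp only [sub_self, zero_div, div_self hpe'] at h2
      simpa [mul_comm] using h2
  have hderiv : ∀ t ∈ Set.Ioo (0:ℝ) 1,
      HasDerivAt (fun t : ℝ => (t ^ θ - 1) * f (e + t * (p - e)))
        (θ * t ^ (θ - 1) * f (e + t * (p - e))
          + (t ^ θ - 1) * ((p - e) * f' (e + t * (p - e)))) t := by
    intro t ht
    have h1 : HasDerivAt (fun t : ℝ => t ^ θ - 1) (θ * t ^ (θ - 1)) t :=
      (Real.hasDerivAt_rpow_const (Or.inl (ne_of_gt ht.1))).sub_const 1
    have h2 := hcomp t ⟨ht.1.le, ht.2.le⟩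
    refine (h1.mul h2).congr_deriv ?_
    ring
  have hGc : ContinuousOn (fun t : ℝ => (t ^ θ - 1) * f (e + t * (p - e))) (Set.Icc 0 1) := by
    apply ContinuousOn.mul _ hfc
    apply Continuous.continuousOn
    exact (continuous_iff_continuousAt.2 fun t =>
      Real.continuousAt_rpow_const t θ (Or.inr hθ.le)).sub continuous_const
  have hi1 : IntervalIntegrable (fun t : ℝ => θ * t ^ (θ - 1) * f (e + t * (p - e)))
      volume 0 1 := by
    apply IntervalIntegrable.mul_continuousOn
    · exact (intervalIntegral.intervalIntegrable_rpow' (by linarith)).const_mul θ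
    · rwa [Set.uIcc_of_le zero_le_one]
  have hi2 : IntervalIntegrable
      (fun t : ℝ => (t ^ θ - 1) * ((p - e) * f' (e + t * (p - e)))) volume 0 1 := by
    apply IntervalIntegrable.continuousOn_mul (hint2.const_mul (p - e))
    apply Continuous.continuousOn
    exact (continuous_iff_continuousAt.2 fun t =>
      Real.continuousAt_rpow_const t θ (Or.inr hθ.le)).sub continuous_const
  have key := intervalIntegral.integral_eq_sub_of_hasDeriv_right_of_le zero_le_one hGc
      (fun t ht => (hderiv t ht).hasDerivWithinAt) (hi1.add hi2)
  rw [intervalIntegral.integral_add hi1 hi2] at key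
  have e1 : (fun t : ℝ => θ * t ^ (θ - 1) * f (e + t * (p - e)))
      = fun t : ℝ => θ * (t ^ (θ - 1) * f (e + t * (p - e))) := by funext t; ring
  have e2 : (fun t : ℝ => (t ^ θ - 1) * ((p - e) * f' (e + t * (p - e))))
      = fun t : ℝ => (p - e) * ((t ^ θ - 1) * f' (e + t * (p - e))) := by funext t; ring
  rw [e1, e2, intervalIntegral.integral_const_mul, intervalIntegral.integral_const_mul] at key
  have h10 : ((1:ℝ) ^ θ - 1) * f (e + 1 * (p - e)) - ((0:ℝ) ^ θ - 1) * f (e + 0 * (p - e))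
      = f e := by
    rw [Real.one_rpow, Real.zero_rpow (ne_of_gt hθ)]
    simp
  rw [h10] at key
  linarith

lemma rpow_succ' {x : ℝ} (hx : 0 < x) (θ : ℝ) : x ^ θ = x * x ^ (θ - 1) := by
  have h := Real.rpow_add hx 1 (θ - 1)
  rw [Real.rpow_one, show (1:ℝ) + (θ - 1) = θ by ring] at h
  exact h

lemma subst_left (g : ℝ → ℝ) (c d θ : ℝ) (hθ : 0 < θ) (hcd : c ≤ d) :
    ∫ t in c..d, (t - c) ^ (θ - 1) * g t
      = (d - c) ^ θ * ∫ s in (0:ℝ)..1, s ^ (θ - 1) * g (c + s * (d - c)) := by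
  rcases eq_or_lt_of_le hcd with rfl | hlt
  · simp [Real.zero_rpow (ne_of_gt hθ)]
  · have hK : (0:ℝ) < d - c := by linarith
    have h1 := intervalIntegral.integral_comp_mul_add
      (fun t => (t - c) ^ (θ - 1) * g t) (ne_of_gt hK) c (a := 0) (b := 1)
    have hb0 : (d - c) * 0 + c = c := by ring
    have hb1 : (d - c) * 1 + c = d := by ring
    rw [hb0, hb1] at h1
    have h2 : ∫ s in (0:ℝ)..1, ((d - c) * s + c - c) ^ (θ - 1) * g ((d - c) * s + c)
        = (d - c) ^ (θ - 1) * ∫ s in (0:ℝ)..1, s ^ (θ - 1) * g (c + s * (d - c)) := by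
      rw [← intervalIntegral.integral_const_mul]
      apply intervalIntegral.integral_congr
      intro s hs
      rw [Set.uIcc_of_le zero_le_one] at hs
      dsimp only
      rw [show (d - c) * s + c = c + s * (d - c) by ring, add_sub_cancel_left,
        Real.mul_rpow hs.1 hK.le]
      ring
    rw [h2, smul_eq_mul] at h1
    have hne : d - c ≠ 0 := ne_of_gt hK
    rw [rpow_succ' hK θ, mul_assoc, h1]
    field_simp

lemma subst_right (g : ℝ → ℝ) (c d θ : ℝ) (hθ : 0 < θ) (hcd : c ≤ d) :
    ∫ t in c..d, (d - t) ^ (θ - 1) * g t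
      = (d - c) ^ θ * ∫ s in (0:ℝ)..1, s ^ (θ - 1) * g (d + s * (c - d)) := by
  rcases eq_or_lt_of_le hcd with rfl | hlt
  · simp [Real.zero_rpow (ne_of_gt hθ)]
  · have hK : (0:ℝ) < d - c := by linarith
    have h1 := intervalIntegral.integral_comp_mul_add
      (fun t => (d - t) ^ (θ - 1) * g t) (c := c - d) (by linarith [hK] : c - d ≠ 0) d
      (a := 0) (b := 1)
    have hb0 : (c - d) * 0 + d = d := by ring
    have hb1 : (c - d) * 1 + d = c := by ring
    rw [hb0, hb1] at h1
    have h2 : ∫ s in (0:ℝ)..1, (d - ((c - d) * s + d)) ^ (θ - 1) * g ((c - d) * s + d)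
        = (d - c) ^ (θ - 1) * ∫ s in (0:ℝ)..1, s ^ (θ - 1) * g (d + s * (c - d)) := by
      rw [← intervalIntegral.integral_const_mul]
      apply intervalIntegral.integral_congr
      intro s hs
      rw [Set.uIcc_of_le zero_le_one] at hs
      dsimp only
      rw [show (c - d) * s + d = d + s * (c - d) by ring,
        show d - (d + s * (c - d)) = s * (d - c) by ring, Real.mul_rpow hs.1 hK.le]
      ring
    rw [h2, smul_eq_mul, intervalIntegral.integral_symm c d] at h1
    have h3 : ∫ t in c..d, (d - t) ^ (θ - 1) * g t
        = (d - c) * ((d - c) ^ (θ - 1) * ∫ s in (0:ℝ)..1, s ^ (θ - 1) * g (d + s * (c - d))) := by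
      have hcd' : c - d ≠ 0 := by linarith [hK]
      field_simp at h1
      linarith [h1]
    rw [h3, rpow_succ' hK θ, mul_assoc]

lemma int01_rpow (r : ℝ) (hr : 0 ≤ r) : ∫ t in (0:ℝ)..1, t ^ r = 1 / (r + 1) := by
  rw [integral_rpow (Or.inl (by linarith : (-1:ℝ) < r))]
  rw [Real.one_rpow, Real.zero_rpow (by linarith : r + 1 ≠ 0)]
  norm_num

lemma hw_int (θ : ℝ) (hθ : 0 < θ) :
    ∫ t in (0:ℝ)..1, (1 - t ^ θ) = θ / (θ + 1) := by
  have h1 : IntervalIntegrable (fun _ : ℝ => (1:ℝ)) volume 0 1 := intervalIntegrable_const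
  have h2 : IntervalIntegrable (fun t : ℝ => t ^ θ) volume 0 1 :=
    intervalIntegral.intervalIntegrable_rpow' (by linarith)
  rw [intervalIntegral.integral_sub h1 h2, int01_rpow θ hθ.le]
  simp only [intervalIntegral.integral_const, smul_eq_mul]
  field_simp
  ring

lemma side_bound (g : ℝ → ℝ) (θ α q A B m : ℝ) (hθ : 0 < θ) (hq : 1 ≤ q)
    (hα0 : 0 ≤ α) (hm0 : 0 < m) (hA : 0 ≤ A) (hB : 0 ≤ B)
    (hgint : IntervalIntegrable g volume 0 1)
    (hbd : ∀ t ∈ Set.Icc (0:ℝ) 1, |g t| ^ q ≤ t ^ α * A + m * (1 - t ^ α) * B) :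
    |∫ t in (0:ℝ)..1, (t ^ θ - 1) * g t|
      ≤ (θ / (θ + 1)) ^ (1 - 1 / q) *
        (A * (θ / ((α + 1) * (α + θ + 1)))
          + m * B * (θ * α * (α + θ + 2) / ((θ + 1) * (α + 1) * (α + θ + 1)))) ^ (1 / q) := by
  have hq0 : 0 < q := by linarith
  have hqne : q ≠ 0 := ne_of_gt hq0
  have hα1 : (0:ℝ) < α + 1 := by linarith
  have hαθ1 : (0:ℝ) < α + θ + 1 := by linarith
  have hθ1 : (0:ℝ) < θ + 1 := by linarith
  set w : ℝ → ℝ := fun t => 1 - t ^ θ with hwdef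
  set V : ℝ := A * (θ / ((α + 1) * (α + θ + 1)))
      + m * B * (θ * α * (α + θ + 2) / ((θ + 1) * (α + 1) * (α + θ + 1))) with hVdef
  have hw_cont : Continuous w :=
    continuous_const.sub (continuous_iff_continuousAt.2 fun t =>
      Real.continuousAt_rpow_const t θ (Or.inr hθ.le))
  have hcα : Continuous fun t : ℝ => t ^ α :=
    continuous_iff_continuousAt.2 fun t => Real.continuousAt_rpow_const t α (Or.inr hα0)
  have hcαθ : Continuous fun t : ℝ => t ^ (α + θ) :=
    continuous_iff_continuousAt.2 fun t =>
      Real.continuousAt_rpow_const t (α + θ) (Or.inr (by linarith))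
  have hw01 : ∀ t ∈ Set.Icc (0:ℝ) 1, 0 ≤ w t ∧ w t ≤ 1 := by
    intro t ht
    constructor
    · simp only [hwdef, sub_nonneg]
      exact Real.rpow_le_one ht.1 ht.2 hθ.le
    · have := Real.rpow_nonneg ht.1 θ
      simp only [hwdef]
      linarith
  -- measurability of |g|^q on the restricted measure
  have hg_meas : AEStronglyMeasurable g (volume.restrict (Set.Ioc (0:ℝ) 1)) :=
    hgint.1.aestronglyMeasurable
  have hcabsq : Continuous fun y : ℝ => |y| ^ q :=
    continuous_abs.rpow_const fun y => Or.inr hq0.le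
  have hgq_meas : AEStronglyMeasurable (fun t => |g t| ^ q)
      (volume.restrict (Set.Ioc (0:ℝ) 1)) := hcabsq.comp_aestronglyMeasurable hg_meas
  haveI : IsFiniteMeasure (volume.restrict (Set.Ioc (0:ℝ) 1)) := by
    constructor
    rw [Measure.restrict_apply_univ]
    simp [Real.volume_Ioc]
  -- uniform bound
  set M : ℝ := A + m * B with hMdef
  have hM0 : 0 ≤ M := by positivity
  have hMg : ∀ t ∈ Set.Ioc (0:ℝ) 1, |g t| ^ q ≤ M := by
    intro t ht
    have h1 := hbd t ⟨ht.1.le, ht.2⟩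
    have h2 : t ^ α ≤ 1 := Real.rpow_le_one ht.1.le ht.2 hα0
    have h3 : 0 ≤ t ^ α := Real.rpow_nonneg ht.1.le α
    nlinarith [mul_nonneg hA (sub_nonneg.mpr h2), mul_nonneg (mul_nonneg hm0.le hB) h3]
  -- step 1 : reduce to ∫ w * |g|
  have habs : |∫ t in (0:ℝ)..1, (t ^ θ - 1) * g t|
      ≤ ∫ t in (0:ℝ)..1, w t * |g t| := by
    refine (intervalIntegral.abs_integral_le_integral_abs zero_le_one).trans_eq ?_
    apply intervalIntegral.integral_congr
    intro t ht
    rw [Set.uIcc_of_le zero_le_one] at ht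
    have h1 : t ^ θ - 1 ≤ 0 := by
      have := Real.rpow_le_one ht.1 ht.2 hθ.le; linarith
    simp only [abs_mul, abs_of_nonpos h1, hwdef]
    ring_nf
  -- integrability of w * |g|^q
  have hwgq_int : IntervalIntegrable (fun t => w t * |g t| ^ q) volume 0 1 := by
    rw [intervalIntegrable_iff_integrableOn_Ioc_of_le zero_le_one]
    rw [IntegrableOn, ← memLp_one_iff_integrable]
    apply MemLp.of_bound ((hw_cont.aestronglyMeasurable).mul hgq_meas) M
    filter_upwards [ae_restrict_mem measurableSet_Ioc] with t ht
    have h1 := hw01 t ⟨ht.1.le, ht.2⟩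
    have h2 := hMg t ht
    have h3 : 0 ≤ |g t| ^ q := Real.rpow_nonneg (abs_nonneg _) q
    simp only [Real.norm_eq_abs, Pi.mul_apply]
    rw [abs_of_nonneg (mul_nonneg h1.1 h3)]
    nlinarith
  -- the comparison integrand and its value
  have hcomp_int : IntervalIntegrable
      (fun t : ℝ => (A - m*B) * t ^ α + ((m*B - A) * t ^ (α + θ) + (-(m*B) * t ^ θ + m*B)))
      volume 0 1 := by
    have hcθ : Continuous fun t : ℝ => t ^ θ :=
      continuous_iff_continuousAt.2 fun t => Real.continuousAt_rpow_const t θ (Or.inr hθ.le)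
    apply Continuous.intervalIntegrable
    exact ((continuous_const.mul hcα).add ((continuous_const.mul hcαθ).add
      ((continuous_const.mul hcθ).add continuous_const)))
  have hVeq : ∫ t in (0:ℝ)..1,
      ((A - m*B) * t ^ α + ((m*B - A) * t ^ (α + θ) + (-(m*B) * t ^ θ + m*B))) = V := by
    have i1 : IntervalIntegrable (fun t : ℝ => (A - m*B) * t ^ α) volume 0 1 :=
      (intervalIntegral.intervalIntegrable_rpow' (by linarith)).const_mul _
    have i2 : IntervalIntegrable (fun t : ℝ => (m*B - A) * t ^ (α + θ)) volume 0 1 :=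
      (intervalIntegral.intervalIntegrable_rpow' (by linarith)).const_mul _
    have i3 : IntervalIntegrable (fun t : ℝ => -(m*B) * t ^ θ) volume 0 1 :=
      (intervalIntegral.intervalIntegrable_rpow' (by linarith)).const_mul _
    have i4 : IntervalIntegrable (fun _ : ℝ => m*B) volume 0 1 := intervalIntegrable_const
    rw [intervalIntegral.integral_add i1 (i2.add (i3.add i4)),
      intervalIntegral.integral_add i2 (i3.add i4),
      intervalIntegral.integral_add i3 i4,
      intervalIntegral.integral_const_mul, intervalIntegral.integral_const_mul,
      intervalIntegral.integral_const_mul,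
      int01_rpow α hα0, int01_rpow (α+θ) (by linarith), int01_rpow θ hθ.le]
    simp only [intervalIntegral.integral_const, smul_eq_mul, hVdef]
    field_simp
    ring
  -- step 4 : ∫ w * |g|^q ≤ V
  have hstep4 : ∫ t in (0:ℝ)..1, w t * |g t| ^ q ≤ V := by
    rw [← hVeq]
    apply intervalIntegral.integral_mono_on zero_le_one hwgq_int hcomp_int
    intro t ht
    have h1 := hw01 t ht
    have hsplit : t ^ (α + θ) = t ^ α * t ^ θ :=
      Real.rpow_add' ht.1 (by linarith : α + θ ≠ 0)
    calc w t * |g t| ^ q ≤ w t * (t ^ α * A + m * (1 - t ^ α) * B) :=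
          mul_le_mul_of_nonneg_left (hbd t ht) h1.1
      _ = (A - m*B) * t ^ α + ((m*B - A) * t ^ (α + θ) + (-(m*B) * t ^ θ + m*B)) := by
          simp only [hwdef, hsplit]; ring
  have hIgq_nonneg : 0 ≤ ∫ t in (0:ℝ)..1, w t * |g t| ^ q :=
    intervalIntegral.integral_nonneg zero_le_one fun t ht =>
      mul_nonneg (hw01 t ht).1 (Real.rpow_nonneg (abs_nonneg _) q)
  have hV0 : 0 ≤ V := le_trans hIgq_nonneg hstep4
  -- main Hölder step
  have hmain : ∫ t in (0:ℝ)..1, w t * |g t|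
      ≤ (θ / (θ + 1)) ^ (1 - 1 / q) * V ^ (1 / q) := by
    rcases eq_or_lt_of_le hq with rfl | hq1
    · simp only [div_one, sub_self, Real.rpow_zero, one_mul, Real.rpow_one]
      refine le_trans (le_of_eq ?_) hstep4
      apply intervalIntegral.integral_congr
      intro t _
      simp [Real.rpow_one]
    · -- q > 1 : Hölder
      set p : ℝ := q / (q - 1) with hpdef
      have hq1' : (0:ℝ) < q - 1 := by linarith
      have hp1 : 1 < p := by
        rw [hpdef, lt_div_iff₀ hq1']
        linarith
      have hp0 : p ≠ 0 := by positivity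
      have hpq : p.HolderConjugate q := by
        rw [Real.holderConjugate_iff]
        constructor
        · exact hp1
        · rw [hpdef]; field_simp; ring
      set μ := volume.restrict (Set.Ioc (0:ℝ) 1) with hμdef
      set F : ℝ → ℝ := fun t => w t ^ (1/p) with hFdef
      set G : ℝ → ℝ := fun t => w t ^ (1/q) * |g t| with hGdef
      have haew : ∀ᵐ t ∂μ, 0 ≤ w t ∧ w t ≤ 1 := by
        filter_upwards [ae_restrict_mem measurableSet_Ioc] with t ht
        exact hw01 t ⟨ht.1.le, ht.2⟩
      have hF0 : 0 ≤ᵐ[μ] F := by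
        filter_upwards [haew] with t ht
        exact Real.rpow_nonneg ht.1 _
      have hG0 : 0 ≤ᵐ[μ] G := by
        filter_upwards [haew] with t ht
        exact mul_nonneg (Real.rpow_nonneg ht.1 _) (abs_nonneg _)
      have hFmem : MemLp F (ENNReal.ofReal p) μ := by
        apply MemLp.of_bound (hw_cont.rpow_const fun x => Or.inr (by positivity)).aestronglyMeasurable 1
        filter_upwards [haew] with t ht
        show ‖w t ^ (1/p)‖ ≤ 1
        rw [Real.norm_eq_abs, abs_of_nonneg (Real.rpow_nonneg ht.1 _)]
        exact Real.rpow_le_one ht.1 ht.2 (by positivity)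
      have hGmem : MemLp G (ENNReal.ofReal q) μ := by
        apply MemLp.of_bound (((hw_cont.rpow_const fun x => Or.inr (by positivity)).aestronglyMeasurable).mul hg_meas.norm) (M ^ (1/q))
        filter_upwards [haew, ae_restrict_mem measurableSet_Ioc] with t ht ht'
        have h1 : 0 ≤ w t ^ (1/q) := Real.rpow_nonneg ht.1 _
        have h2 : w t ^ (1/q) ≤ 1 := Real.rpow_le_one ht.1 ht.2 (by positivity)
        have h3 : |g t| ≤ M ^ (1/q) := by
          have h4 := Real.rpow_le_rpow (Real.rpow_nonneg (abs_nonneg (g t)) q) (hMg t ht') (by positivity : (0:ℝ) ≤ 1/q)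
          rwa [one_div, Real.rpow_rpow_inv (abs_nonneg _) hqne, ← one_div] at h4
        have h5 : 0 ≤ M ^ (1/q) := Real.rpow_nonneg hM0 _
        show ‖w t ^ (1/q) * ‖g t‖‖ ≤ M ^ (1/q)
        simp only [Real.norm_eq_abs, abs_abs]
        rw [abs_of_nonneg (mul_nonneg h1 (abs_nonneg _))]
        nlinarith [abs_nonneg (g t)]
      have hHolder := MeasureTheory.integral_mul_le_Lp_mul_Lq_of_nonneg hpq hF0 hG0 hFmem hGmem
      -- identify the three integrals
      have hFG : ∫ t, F t * G t ∂μ = ∫ t in (0:ℝ)..1, w t * |g t| := by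
        rw [intervalIntegral.integral_of_le zero_le_one]
        apply MeasureTheory.integral_congr_ae
        filter_upwards [haew] with t ht
        have hsum : 1/p + 1/q = 1 := by
          rw [one_div, one_div]; exact hpq.inv_add_inv_eq_one
        show w t ^ (1/p) * (w t ^ (1/q) * |g t|) = w t * |g t|
        rw [← mul_assoc, ← Real.rpow_add' ht.1 (by rw [hsum]; norm_num), hsum, Real.rpow_one]
      have hFp : ∫ t, F t ^ p ∂μ = θ / (θ + 1) := by
        rw [← hw_int θ hθ, intervalIntegral.integral_of_le zero_le_one]
        apply MeasureTheory.integral_congr_ae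
        filter_upwards [haew] with t ht
        show (w t ^ (1/p)) ^ p = w t
        rw [← Real.rpow_mul ht.1, one_div, inv_mul_cancel₀ hp0, Real.rpow_one]
      have hGq : ∫ t, G t ^ q ∂μ = ∫ t in (0:ℝ)..1, w t * |g t| ^ q := by
        rw [intervalIntegral.integral_of_le zero_le_one]
        apply MeasureTheory.integral_congr_ae
        filter_upwards [haew] with t ht
        show (w t ^ (1/q) * |g t|) ^ q = w t * |g t| ^ q
        rw [Real.mul_rpow (Real.rpow_nonneg ht.1 _) (abs_nonneg _), ← Real.rpow_mul ht.1,
          one_div, inv_mul_cancel₀ hqne, Real.rpow_one]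
      rw [hFG, hFp, hGq] at hHolder
      have hpexp : 1/p = 1 - 1/q := by
        rw [hpdef]
        field_simp
      rw [hpexp] at hHolder
      refine hHolder.trans ?_
      apply mul_le_mul_of_nonneg_left
      · exact Real.rpow_le_rpow hIgq_nonneg hstep4 (by positivity)
      · exact Real.rpow_nonneg (by positivity) _
  exact habs.trans hmain

lemma comp_affine_int (f' : ℝ → ℝ) (e p : ℝ)
    (hint : IntervalIntegrable f' volume e p) :
    IntervalIntegrable (fun t : ℝ => f' (e + t * (p - e))) volume 0 1 := by
  rcases eq_or_ne p e with rfl | hpe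
  · simp only [sub_self, mul_zero, add_zero]
    exact intervalIntegrable_const
  · have hpe' : p - e ≠ 0 := sub_ne_zero.mpr hpe
    have h2 := (hint.comp_add_left e).comp_mul_left (c := p - e)
    simp only [sub_self, zero_div, div_self hpe'] at h2
    simpa [mul_comm] using h2

lemma rpow_succ0 {y : ℝ} (hy : 0 ≤ y) {θ : ℝ} (hθ : 0 < θ) :
    y ^ (θ + 1) = y ^ θ * y := by
  rcases eq_or_lt_of_le hy with rfl | h
  · rw [Real.zero_rpow (by linarith : θ + 1 ≠ 0), Real.zero_rpow (ne_of_gt hθ), mul_zero]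
  · rw [show θ + 1 = θ + (1:ℝ) from rfl, Real.rpow_add h, Real.rpow_one]

set_option maxHeartbeats 2000000 in
theorem trapezoid_powmean
    (I : Set ℝ) (hI : Set.OrdConnected I) (hI0 : I ⊆ Set.Ici (0:ℝ)) (f f' : ℝ → ℝ) (m a b : ℝ)
    (hm : m ∈ Set.Ioc (0:ℝ) 1) (hab : a < b)
    (hma : m * a ∈ interior I) (hb : b ∈ interior I)
    (hf : ∀ y ∈ interior I, HasDerivAt f (f' y) y)
    (hint : IntervalIntegrable f' MeasureTheory.volume (m * a) (m * b))
    (α q : ℝ) (hα : α ∈ Set.Icc (0:ℝ) 1) (hq : 1 ≤ q)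
    (hconv : AlphaMConvexOn α m (m * a) b (fun u => |f' u| ^ q)) :
    ∀ x ∈ Set.Icc a b, ∀ θ : ℝ, 0 < θ →
      |((x - a) ^ θ * f (m * a) + (b - x) ^ θ * f (m * b)) / (b - a) -
          Real.Gamma (θ + 1) / (m ^ θ * (b - a)) *
            (rlLeft θ (m * a) (m * x) f + rlRight θ (m * x) (m * b) f)| ≤
        m / (b - a) * (θ / (θ + 1)) ^ (1 - 1 / q) *
          ((x - a) ^ (θ + 1) *
              (|f' (m * x)| ^ q * (θ / ((α + 1) * (α + θ + 1))) +
                m * |f' a| ^ q *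
                  (θ * α * (α + θ + 2) / ((θ + 1) * (α + 1) * (α + θ + 1)))) ^ (1 / q) +
            (b - x) ^ (θ + 1) *
              (|f' (m * x)| ^ q * (θ / ((α + 1) * (α + θ + 1))) +
                m * |f' b| ^ q *
                  (θ * α * (α + θ + 2) / ((θ + 1) * (α + 1) * (α + θ + 1)))) ^ (1 / q)) := by
  obtain ⟨hm0, hm1⟩ := hm
  obtain ⟨hα0, hα1⟩ := hα
  intro x hx θ hθ
  obtain ⟨hxa, hxb⟩ := hx
  have hma0 : 0 ≤ m * a := hI0 (interior_subset hma)
  have ha0 : 0 ≤ a := by nlinarith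
  have hb0 : 0 ≤ b := le_trans ha0 hab.le
  have hx0 : 0 ≤ x := le_trans ha0 hxa
  have hba : 0 < b - a := by linarith
  have hxa' : 0 ≤ x - a := by linarith
  have hxb' : 0 ≤ b - x := by linarith
  have hmamx : m * a ≤ m * x := by nlinarith
  have hmxmb : m * x ≤ m * b := by nlinarith
  have hmamb : m * a ≤ m * b := le_trans hmamx hmxmb
  have hmbb : m * b ≤ b := by nlinarith
  have hIc : (interior I).OrdConnected := hI.interior
  have hmb_mem : m * b ∈ interior I := hIc.out hma hb ⟨hmamb, hmbb⟩
  have hsub : Set.Icc (m * a) (m * b) ⊆ interior I := hIc.out hma hmb_mem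
  have hΓpos : 0 < Real.Gamma θ := Real.Gamma_pos_of_pos hθ
  have hΓne : Real.Gamma θ ≠ 0 := ne_of_gt hΓpos
  have hGθ : Real.Gamma (θ + 1) = θ * Real.Gamma θ := Real.Gamma_add_one (ne_of_gt hθ)
  have hmθ : (0:ℝ) < m ^ θ := Real.rpow_pos_of_pos hm0 θ
  -- abbreviations
  set IL : ℝ := ∫ t in (0:ℝ)..1, (t ^ θ - 1) * f' (m * a + t * (m * x - m * a)) with hILdef
  set IR : ℝ := ∫ t in (0:ℝ)..1, (t ^ θ - 1) * f' (m * b + t * (m * x - m * b)) with hIRdef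
  set P : ℝ := ∫ s in (0:ℝ)..1, s ^ (θ - 1) * f (m * a + s * (m * x - m * a)) with hPdef
  set Q : ℝ := ∫ s in (0:ℝ)..1, s ^ (θ - 1) * f (m * b + s * (m * x - m * b)) with hQdef
  -- identities
  have hfL : ∀ y ∈ Set.uIcc (m * a) (m * x), HasDerivAt f (f' y) y := by
    intro y hy
    apply hf
    apply hsub
    rw [Set.uIcc_of_le hmamx] at hy
    exact ⟨hy.1, le_trans hy.2 hmxmb⟩
  have hfR : ∀ y ∈ Set.uIcc (m * b) (m * x), HasDerivAt f (f' y) y := by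
    intro y hy
    apply hf
    apply hsub
    rw [Set.uIcc_of_ge hmxmb] at hy
    exact ⟨le_trans hmamx hy.1, hy.2⟩
  have hintL : IntervalIntegrable f' volume (m * a) (m * x) := by
    apply hint.mono_set
    apply Set.uIcc_subset_uIcc left_mem_uIcc
    rw [Set.uIcc_of_le hmamb]
    exact ⟨hmamx, hmxmb⟩
  have hintR : IntervalIntegrable f' volume (m * b) (m * x) := by
    apply hint.mono_set
    apply Set.uIcc_subset_uIcc right_mem_uIcc
    rw [Set.uIcc_of_le hmamb]
    exact ⟨hmamx, hmxmb⟩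
  have hidL := ident_side f f' (m * a) (m * x) θ hθ hfL hintL
  have hidR := ident_side f f' (m * b) (m * x) θ hθ hfR hintR
  rw [← hPdef, ← hILdef] at hidL
  rw [← hQdef, ← hIRdef] at hidR
  have hfma : f (m * a) = θ * P + m * (x - a) * IL := by linear_combination hidL
  have hfmb : f (m * b) = θ * Q - m * (b - x) * IR := by linear_combination hidR
  have hsubL := subst_left f (m * a) (m * x) θ hθ hmamx
  have hsubR := subst_right f (m * x) (m * b) θ hθ hmxmb
  rw [← hPdef] at hsubL
  rw [← hQdef] at hsubR
  have hKLθ : (m * x - m * a) ^ θ = m ^ θ * (x - a) ^ θ := by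
    rw [show m * x - m * a = m * (x - a) by ring, Real.mul_rpow hm0.le hxa']
  have hKRθ : (m * b - m * x) ^ θ = m ^ θ * (b - x) ^ θ := by
    rw [show m * b - m * x = m * (b - x) by ring, Real.mul_rpow hm0.le hxb']
  have hrl : rlLeft θ (m * a) (m * x) f = m ^ θ * (x - a) ^ θ * P / Real.Gamma θ := by
    rw [rlLeft, hsubL, hKLθ]
    ring
  have hrr : rlRight θ (m * x) (m * b) f = m ^ θ * (b - x) ^ θ * Q / Real.Gamma θ := by
    rw [rlRight, hsubR, hKRθ]
    ring
  have hpow1 : (x - a) ^ (θ + 1) = (x - a) ^ θ * (x - a) := rpow_succ0 hxa' hθ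
  have hpow2 : (b - x) ^ (θ + 1) = (b - x) ^ θ * (b - x) := rpow_succ0 hxb' hθ
  -- the key identity
  have hID : ((x - a) ^ θ * f (m * a) + (b - x) ^ θ * f (m * b)) / (b - a) -
      Real.Gamma (θ + 1) / (m ^ θ * (b - a)) *
        (rlLeft θ (m * a) (m * x) f + rlRight θ (m * x) (m * b) f)
      = m / (b - a) * ((x - a) ^ (θ + 1) * IL - (b - x) ^ (θ + 1) * IR) := by
    rw [hrl, hrr, hfma, hfmb, hGθ, hpow1, hpow2]
    field_simp
    ring
  rw [hID]
  -- convexity bounds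
  have hmxI : m * x ∈ Set.Icc (m * a) b := ⟨hmamx, by nlinarith⟩
  have haI : a ∈ Set.Icc (m * a) b := ⟨by nlinarith, hab.le⟩
  have hbI : b ∈ Set.Icc (m * a) b := ⟨by nlinarith, le_refl b⟩
  have hbdL : ∀ t ∈ Set.Icc (0:ℝ) 1,
      |f' (m * a + t * (m * x - m * a))| ^ q
        ≤ t ^ α * |f' (m * x)| ^ q + m * (1 - t ^ α) * |f' a| ^ q := by
    intro t ht
    have hmem : t * (m * x) + m * (1 - t) * a ∈ Set.Icc (m * a) b := by
      constructor
      · nlinarith [mul_nonneg ht.1 (sub_nonneg.mpr hxa)]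
      · nlinarith [mul_nonneg (sub_nonneg.mpr ht.2) (sub_nonneg.mpr hxa), hmxI.2]
    have h := hconv (m * x) hmxI a haI t ht hmem
    rw [show m * a + t * (m * x - m * a) = t * (m * x) + m * (1 - t) * a by ring]
    exact h
  have hbdR : ∀ t ∈ Set.Icc (0:ℝ) 1,
      |f' (m * b + t * (m * x - m * b))| ^ q
        ≤ t ^ α * |f' (m * x)| ^ q + m * (1 - t ^ α) * |f' b| ^ q := by
    intro t ht
    have hmem : t * (m * x) + m * (1 - t) * b ∈ Set.Icc (m * a) b := by
      constructor
      · nlinarith [mul_nonneg ht.1 (sub_nonneg.mpr hxa), mul_nonneg (sub_nonneg.mpr ht.2) (sub_nonneg.mpr hxb')]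
      · nlinarith [mul_nonneg ht.1 (sub_nonneg.mpr hxb'), mul_nonneg (sub_nonneg.mpr ht.2) hxb']
    have h := hconv (m * x) hmxI b hbI t ht hmem
    rw [show m * b + t * (m * x - m * b) = t * (m * x) + m * (1 - t) * b by ring]
    exact h
  have hA0 : 0 ≤ |f' (m * x)| ^ q := Real.rpow_nonneg (abs_nonneg _) q
  have hBa0 : 0 ≤ |f' a| ^ q := Real.rpow_nonneg (abs_nonneg _) q
  have hBb0 : 0 ≤ |f' b| ^ q := Real.rpow_nonneg (abs_nonneg _) q
  have hBL := side_bound (fun t => f' (m * a + t * (m * x - m * a))) θ α q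
    (|f' (m * x)| ^ q) (|f' a| ^ q) m hθ hq hα0 hm0 hA0 hBa0
    (comp_affine_int f' (m * a) (m * x) hintL) hbdL
  have hBR := side_bound (fun t => f' (m * b + t * (m * x - m * b))) θ α q
    (|f' (m * x)| ^ q) (|f' b| ^ q) m hθ hq hα0 hm0 hA0 hBb0
    (comp_affine_int f' (m * b) (m * x) hintR) hbdR
  rw [← hILdef] at hBL
  rw [← hIRdef] at hBR
  -- final assembly
  have hC0 : 0 ≤ (θ / (θ + 1)) ^ (1 - 1/q) := Real.rpow_nonneg (by positivity) _
  have hpa : 0 ≤ (x - a) ^ (θ + 1) := Real.rpow_nonneg hxa' _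
  have hpb : 0 ≤ (b - x) ^ (θ + 1) := Real.rpow_nonneg hxb' _
  have hmb0 : 0 ≤ m / (b - a) := by positivity
  calc |m / (b - a) * ((x - a) ^ (θ + 1) * IL - (b - x) ^ (θ + 1) * IR)|
      ≤ m / (b - a) * ((x - a) ^ (θ + 1) * |IL| + (b - x) ^ (θ + 1) * |IR|) := by
        rw [abs_mul, abs_of_nonneg hmb0]
        apply mul_le_mul_of_nonneg_left _ hmb0
        refine (abs_sub _ _).trans ?_
        rw [abs_mul, abs_mul, abs_of_nonneg hpa, abs_of_nonneg hpb]
    _ ≤ m / (b - a) * ((x - a) ^ (θ + 1) *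
          ((θ / (θ + 1)) ^ (1 - 1/q) *
            (|f' (m * x)| ^ q * (θ / ((α + 1) * (α + θ + 1))) +
              m * |f' a| ^ q * (θ * α * (α + θ + 2) / ((θ + 1) * (α + 1) * (α + θ + 1)))) ^ (1/q))
        + (b - x) ^ (θ + 1) *
          ((θ / (θ + 1)) ^ (1 - 1/q) *
            (|f' (m * x)| ^ q * (θ / ((α + 1) * (α + θ + 1))) +
              m * |f' b| ^ q * (θ * α * (α + θ + 2) / ((θ + 1) * (α + 1) * (α + θ + 1)))) ^ (1/q))) := by
        apply mul_le_mul_of_nonneg_left _ hmb0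
        apply add_le_add
        · apply mul_le_mul_of_nonneg_left _ hpa
          refine hBL.trans (le_of_eq ?_)
          ring_nf
        · apply mul_le_mul_of_nonneg_left _ hpb
          refine hBR.trans (le_of_eq ?_)
          ring_nf
    _ = m / (b - a) * (θ / (θ + 1)) ^ (1 - 1/q) *
          ((x - a) ^ (θ + 1) *
              (|f' (m * x)| ^ q * (θ / ((α + 1) * (α + θ + 1))) +
                m * |f' a| ^ q * (θ * α * (α + θ + 2) / ((θ + 1) * (α + 1) * (α + θ + 1)))) ^ (1/q) +
            (b - x) ^ (θ + 1) *
              (|f' (m * x)| ^ q * (θ / ((α + 1) * (α + θ + 1))) +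
                m * |f' b| ^ q * (θ * α * (α + θ + 2) / ((θ + 1) * (α + 1) * (α + θ + 1)))) ^ (1/q)) := by
        ring
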